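/- Let f^1,...,f^m be monomials in S and, for 1 ≤ k ≤ n = binom(m,2), let F^k = ⟨β_1,...,β_k⟩ with β_j = β_{(μ_j,ν_j)} ordered as: τ_1=(1,2),...,τ_{m−1}=(m−1,m), τ_m=(1,m), then τ_{m+1}=(1,3),...,τ_{2m−3}=(1,m−1), then the rest lexicographically. Then for m+1 ≤ k ≤ 2m−3, the quotient F^k/F^{k−1} is isomorphic to S/I_k, where I_k = ⟨ f^{1,k−m+2,...,m}/f^{1,k−m+2}, f^{1,k−m+1,k−m+2}/f^{1,k−m+2} ⟩; here f^{i_1,...,i_r} = lcm(f^{i_1},...,f^{i_r}). -/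

import Mathlib

open MvPolynomial Submodule

namespace S19
variable {K : Type*} [Field K] {d m : ℕ}

noncomputable def bb (a : Fin m → (Fin d →₀ ℕ)) (μ ν : Fin m) : Fin m → MvPolynomial (Fin d) K :=
  Pi.single ν (monomial (a μ ⊔ a ν - a ν) (1 : K))
    - Pi.single μ (monomial (a μ ⊔ a ν - a μ) (1 : K))

def P1 (m : ℕ) (t : Fin m) (μ ν : Fin m) : Prop :=
  (ν : ℕ) = (μ : ℕ) + 1 ∨ ((μ : ℕ) = 0 ∧ (ν : ℕ) = m - 1)
    ∨ ((μ : ℕ) = 0 ∧ 2 ≤ (ν : ℕ) ∧ (ν : ℕ) < (t : ℕ))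

noncomputable def F1 (a : Fin m → (Fin d →₀ ℕ)) (t : Fin m) :
    Submodule (MvPolynomial (Fin d) K) (Fin m → MvPolynomial (Fin d) K) :=
  Submodule.span _ { b | ∃ μ ν : Fin m, P1 m t μ ν ∧ b = bb a μ ν }

lemma gen_mem (a : Fin m → (Fin d →₀ ℕ)) {t μ ν : Fin m} (h : P1 m t μ ν) :
    bb a μ ν ∈ (F1 a t : Submodule (MvPolynomial (Fin d) K) _) :=
  subset_span ⟨μ, ν, h, rfl⟩

theorem mono_dvd_iff (u : Fin d →₀ ℕ) (p : MvPolynomial (Fin d) K) :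
    (monomial u (1:K)) ∣ p ↔ ∀ s ∈ p.support, u ≤ s := by
  rw [monomial_one_dvd_iff_modMonomial_eq_zero]
  constructor
  · intro h s hs
    by_contra hle
    have := coeff_modMonomial_of_not_le p hle
    rw [h] at this
    simp [mem_support_iff] at hs
    exact hs (by simpa using this.symm)
  · intro h
    ext s
    by_cases hle : u ≤ s
    · simp [coeff_modMonomial_of_le p hle]
    · rw [coeff_modMonomial_of_not_le p hle, coeff_zero]
      by_contra hc
      exact hle (h s (mem_support_iff.2 hc))

theorem sup_dvd {u v : Fin d →₀ ℕ} {p : MvPolynomial (Fin d) K}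
    (hu : (monomial u (1:K)) ∣ p) (hv : (monomial v (1:K)) ∣ p) :
    (monomial (u ⊔ v) (1:K)) ∣ p := by
  rw [mono_dvd_iff] at *
  exact fun s hs => sup_le (hu s hs) (hv s hs)

noncomputable def NN [NeZero m] (a : Fin m → (Fin d →₀ ℕ)) (j : ℕ) : Fin d →₀ ℕ :=
  a 0 ⊔ (Finset.univ.filter fun i : Fin m => j ≤ (i : ℕ)).sup a

lemma a0_le_NN [NeZero m] (a : Fin m → (Fin d →₀ ℕ)) (j : ℕ) : a 0 ≤ NN a j := le_sup_left

lemma a_le_NN [NeZero m] (a : Fin m → (Fin d →₀ ℕ)) {j : ℕ} {i : Fin m} (h : j ≤ (i : ℕ)) :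
    a i ≤ NN a j :=
  le_trans (Finset.le_sup (by simp [h])) le_sup_right

lemma NN_le [NeZero m] (a : Fin m → (Fin d →₀ ℕ)) {j : ℕ} {u : Fin d →₀ ℕ}
    (h0 : a 0 ≤ u) (h : ∀ i : Fin m, j ≤ (i : ℕ) → a i ≤ u) : NN a j ≤ u := by
  refine sup_le h0 (Finset.sup_le fun i hi => h i ?_)
  simpa using hi

lemma smul_bb' (a : Fin m → (Fin d →₀ ℕ)) (L : Fin d →₀ ℕ) (μ ν : Fin m)
    (h : a μ ⊔ a ν ≤ L) :
    (monomial (L - (a μ ⊔ a ν)) (1:K)) • bb a μ ν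
      = (Pi.single ν (monomial (L - a ν) (1:K)) : Fin m → MvPolynomial (Fin d) K)
        - Pi.single μ (monomial (L - a μ) (1:K)) := by
  funext i
  simp only [bb, Pi.sub_apply, Pi.smul_apply, Pi.single_apply, smul_eq_mul, mul_sub, mul_ite,
    mul_zero]
  rw [monomial_mul, monomial_mul, one_mul,
    tsub_add_tsub_cancel h le_sup_right, tsub_add_tsub_cancel h le_sup_left]

lemma triple (a : Fin m → (Fin d →₀ ℕ)) (L : Fin d →₀ ℕ) (μ ν σ : Fin m)
    (h1 : a μ ⊔ a ν ≤ L) (h2 : a μ ⊔ a σ ≤ L) (h3 : a ν ⊔ a σ ≤ L) :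
    (monomial (L - (a μ ⊔ a σ)) (1:K)) • bb a μ σ
      = ((monomial (L - (a μ ⊔ a ν)) (1:K)) • bb a μ ν
        + (monomial (L - (a ν ⊔ a σ)) (1:K)) • bb a ν σ : Fin m → MvPolynomial (Fin d) K) := by
  rw [smul_bb' a L _ _ h2, smul_bb' a L _ _ h1, smul_bb' a L _ _ h3]
  abel

def tm1 (t : Fin m) : Fin m := ⟨(t : ℕ) - 1, lt_of_le_of_lt (Nat.sub_le _ _) t.isLt⟩

variable [NeZero m]

lemma g2_mem (a : Fin m → (Fin d →₀ ℕ)) (t : Fin m) (ht2 : 2 ≤ (t:ℕ)) (htm : (t:ℕ) ≤ m - 2) :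
    (monomial ((a 0 ⊔ a (tm1 t) ⊔ a t) - (a 0 ⊔ a t)) (1:K)) • bb a 0 t
      ∈ (F1 a t : Submodule (MvPolynomial (Fin d) K) _) := by
  have h0 : ((0 : Fin m) : ℕ) = 0 := Fin.val_zero m
  have htm1 : ((tm1 t : Fin m) : ℕ) = (t : ℕ) - 1 := rfl
  set L := a 0 ⊔ a (tm1 t) ⊔ a t with hL
  have h1 : a 0 ⊔ a (tm1 t) ≤ L := le_sup_left
  have h2 : a 0 ⊔ a t ≤ L := sup_le (le_sup_of_le_left le_sup_left) le_sup_right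
  have h3 : a (tm1 t) ⊔ a t ≤ L := sup_le (le_sup_of_le_left le_sup_right) le_sup_right
  rw [triple a L 0 (tm1 t) t h1 h2 h3]
  refine add_mem (smul_mem _ _ (gen_mem a ?_)) (smul_mem _ _ (gen_mem a ?_))
  · show ((tm1 t : Fin m) : ℕ) = ((0:Fin m) : ℕ) + 1 ∨ (((0:Fin m):ℕ) = 0 ∧ _) ∨ (((0:Fin m):ℕ) = 0 ∧ 2 ≤ ((tm1 t : Fin m):ℕ) ∧ ((tm1 t : Fin m):ℕ) < (t:ℕ))
    rw [h0, htm1]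
    omega
  · show ((t : Fin m) : ℕ) = ((tm1 t : Fin m) : ℕ) + 1 ∨ _ ∨ _
    rw [htm1]
    exact Or.inl (by omega)

lemma chain (a : Fin m → (Fin d →₀ ℕ)) (t : Fin m) (hm : 4 ≤ m) (ht2 : 2 ≤ (t:ℕ))
    (htm : (t:ℕ) ≤ m - 2) :
    ∀ n j, (t:ℕ) ≤ j → j + n = m - 1 →
    ∀ (hj : j < m),
    (monomial (NN a (t:ℕ) - (a 0 ⊔ a ⟨j, hj⟩)) (1:K)) • bb a 0 ⟨j, hj⟩
      ∈ (F1 a t : Submodule (MvPolynomial (Fin d) K) _) := by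
  have h0 : ((0 : Fin m) : ℕ) = 0 := Fin.val_zero m
  intro n
  induction n with
  | zero =>
    intro j hj hjm hjl
    refine smul_mem _ _ (gen_mem a ?_)
    show ((⟨j, hjl⟩ : Fin m) : ℕ) = ((0:Fin m) : ℕ) + 1 ∨ (((0:Fin m):ℕ) = 0 ∧ ((⟨j, hjl⟩ : Fin m) : ℕ) = m - 1) ∨ (((0:Fin m):ℕ) = 0 ∧ 2 ≤ ((⟨j, hjl⟩ : Fin m):ℕ) ∧ ((⟨j, hjl⟩ : Fin m):ℕ) < (t:ℕ))
    rw [h0]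
    show j = 0 + 1 ∨ (0 = 0 ∧ j = m - 1) ∨ (0 = 0 ∧ 2 ≤ j ∧ j < (t:ℕ))
    omega
  | succ n ih =>
    intro j hj hjm hjl
    have hjl1 : j + 1 < m := by omega
    have h1 : a 0 ⊔ a ⟨j, hjl⟩ ≤ NN a (t:ℕ) :=
      sup_le (a0_le_NN a _) (a_le_NN a (show (t:ℕ) ≤ j from hj))
    have h2 : a 0 ⊔ a ⟨j+1, hjl1⟩ ≤ NN a (t:ℕ) :=
      sup_le (a0_le_NN a _) (a_le_NN a (show (t:ℕ) ≤ j+1 by omega))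
    have h3 : a ⟨j, hjl⟩ ⊔ a ⟨j+1, hjl1⟩ ≤ NN a (t:ℕ) :=
      sup_le (a_le_NN a (show (t:ℕ) ≤ j from hj)) (a_le_NN a (show (t:ℕ) ≤ j+1 by omega))
    have key := triple (K := K) a (NN a (t:ℕ)) 0 ⟨j, hjl⟩ ⟨j+1, hjl1⟩ h1 h2 h3
    have tgt : (monomial (NN a (t:ℕ) - (a 0 ⊔ a ⟨j, hjl⟩)) (1:K)) • bb a 0 ⟨j, hjl⟩
        = (monomial (NN a (t:ℕ) - (a 0 ⊔ a ⟨j+1, hjl1⟩)) (1:K)) • bb a 0 ⟨j+1, hjl1⟩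
          - (monomial (NN a (t:ℕ) - (a ⟨j, hjl⟩ ⊔ a ⟨j+1, hjl1⟩)) (1:K))
              • bb a ⟨j, hjl⟩ ⟨j+1, hjl1⟩ :=
      eq_sub_of_add_eq key.symm
    rw [tgt]
    refine sub_mem (ih (j+1) (by omega) (by omega) hjl1) (smul_mem _ _ (gen_mem a ?_))
    show ((⟨j+1, hjl1⟩ : Fin m) : ℕ) = ((⟨j, hjl⟩ : Fin m) : ℕ) + 1 ∨ _ ∨ _
    exact Or.inl rfl

lemma g1_mem (a : Fin m → (Fin d →₀ ℕ)) (t : Fin m) (hm : 4 ≤ m) (ht2 : 2 ≤ (t:ℕ))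
    (htm : (t:ℕ) ≤ m - 2) :
    (monomial (NN a (t:ℕ) - (a 0 ⊔ a t)) (1:K)) • bb a 0 t
      ∈ (F1 a t : Submodule (MvPolynomial (Fin d) K) _) := by
  have := chain (K := K) a t hm ht2 htm (m - 1 - (t:ℕ)) (t:ℕ) le_rfl (by omega) t.isLt
  simpa only [Fin.eta] using this


open Classical in
lemma mem_F1 (a : Fin m → (Fin d →₀ ℕ)) (t : Fin m) (x : Fin m → MvPolynomial (Fin d) K) :
    x ∈ (F1 a t : Submodule (MvPolynomial (Fin d) K) _) ↔
      ∃ c : Fin m × Fin m → MvPolynomial (Fin d) K,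
        (∀ p, ¬ P1 m t p.1 p.2 → c p = 0) ∧
        ∑ p : Fin m × Fin m, c p • bb a p.1 p.2 = x := by
  have hspan : (F1 a t : Submodule (MvPolynomial (Fin d) K) _)
      = Submodule.span _ (Set.range fun p : Fin m × Fin m =>
          if P1 m t p.1 p.2 then bb a p.1 p.2 else 0) := by
    apply le_antisymm
    · rw [F1, span_le]
      rintro b ⟨μ, ν, h, rfl⟩
      exact subset_span ⟨(μ, ν), if_pos h⟩
    · rw [span_le]
      rintro b ⟨p, rfl⟩
      show (if P1 m t p.1 p.2 then bb a p.1 p.2 else 0) ∈ (F1 a t : Submodule (MvPolynomial (Fin d) K) _)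
      by_cases h : P1 m t p.1 p.2
      · rw [if_pos h]; exact subset_span ⟨p.1, p.2, h, rfl⟩
      · rw [if_neg h]; exact zero_mem _
  rw [hspan, mem_span_range_iff_exists_fun]
  constructor
  · rintro ⟨c, hc⟩
    refine ⟨fun p => if P1 m t p.1 p.2 then c p else 0, fun p hp => if_neg hp, ?_⟩
    rw [← hc]
    refine Finset.sum_congr rfl fun p _ => ?_
    by_cases h : P1 m t p.1 p.2 <;> simp [h]
  · rintro ⟨c, hc, hsum⟩
    refine ⟨c, ?_⟩
    rw [← hsum]
    refine Finset.sum_congr rfl fun p _ => ?_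
    by_cases h : P1 m t p.1 p.2 <;> simp [h, hc p]

lemma coordEq (a : Fin m → (Fin d →₀ ℕ)) (c : Fin m × Fin m → MvPolynomial (Fin d) K)
    (x : Fin m → MvPolynomial (Fin d) K)
    (hsum : ∑ p : Fin m × Fin m, c p • bb a p.1 p.2 = x) (i : Fin m) :
    (∑ μ : Fin m, c (μ, i) * monomial (a μ ⊔ a i - a i) (1:K))
      - (∑ ν : Fin m, c (i, ν) * monomial (a i ⊔ a ν - a i) (1:K)) = x i := by
  have h := congrFun hsum i
  rw [Finset.sum_apply] at h
  have this1 : ∀ μ ν : Fin m, (c (μ, ν) • bb a μ ν) i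
      = (if i = ν then c (μ, ν) * monomial (a μ ⊔ a ν - a ν) (1:K) else 0)
        - (if i = μ then c (μ, ν) * monomial (a μ ⊔ a ν - a μ) (1:K) else 0) := by
    intro μ ν
    simp [bb, Pi.single_apply, smul_eq_mul, mul_sub, mul_ite]
  rw [← h, Fintype.sum_prod_type]
  simp_rw [this1, Finset.sum_sub_distrib]
  congr 1
  · exact (Finset.sum_congr rfl fun μ _ => by
      rw [Finset.sum_ite_eq, if_pos (Finset.mem_univ i)]).symm
  · rw [Finset.sum_comm]
    exact (Finset.sum_congr rfl fun ν _ => by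
      rw [Finset.sum_ite_eq, if_pos (Finset.mem_univ i)]).symm

def FF (m : ℕ) [NeZero m] (j : ℕ) : Fin m := if h : j < m then ⟨j, h⟩ else 0

lemma FF_val {j : ℕ} (h : j < m) : ((FF m j : Fin m) : ℕ) = j := by
  rw [FF, dif_pos h]

lemma FF_zero : (FF m 0 : Fin m) = 0 := by
  have h0 : (0:ℕ) < m := Nat.pos_of_ne_zero (NeZero.ne m)
  apply Fin.ext
  rw [FF_val h0, Fin.val_zero m]

section Red
variable (a : Fin m → (Fin d →₀ ℕ)) (t : Fin m)
  (c : Fin m × Fin m → MvPolynomial (Fin d) K)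

lemma red1 (hc : ∀ p, ¬ P1 m t p.1 p.2 → c p = 0) {i : ℕ} (h2 : 2 ≤ i) (him : i < m) :
    ∑ μ : Fin m, c (μ, FF m i) * monomial (a μ ⊔ a (FF m i) - a (FF m i)) (1:K)
      = c (FF m (i-1), FF m i) * monomial (a (FF m (i-1)) ⊔ a (FF m i) - a (FF m i)) (1:K)
        + c (0, FF m i) * monomial (a 0 ⊔ a (FF m i) - a (FF m i)) (1:K) := by
  have hne : (FF m (i-1) : Fin m) ≠ 0 := by
    intro h
    have := congrArg Fin.val h
    rw [FF_val (by omega), Fin.val_zero m] at this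
    omega
  have hpair := Finset.sum_pair (f := fun μ : Fin m =>
    c (μ, FF m i) * monomial (a μ ⊔ a (FF m i) - a (FF m i)) (1:K)) hne
  rw [← hpair]
  refine (Finset.sum_subset (Finset.subset_univ _) ?_).symm
  intro μ _ hμ
  have hcz : c (μ, FF m i) = 0 := by
    refine hc _ fun hP => hμ ?_
    dsimp only at hP
    rcases hP with h1 | h1 | h1
    · rw [FF_val him] at h1
      have : μ = FF m (i-1) := by
        apply Fin.ext
        rw [FF_val (by omega)]
        omega
      simp [this]
    · have : μ = 0 := Fin.ext (by rw [h1.1, Fin.val_zero m])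
      simp [this]
    · have : μ = 0 := Fin.ext (by rw [h1.1, Fin.val_zero m])
      simp [this]
  rw [hcz, zero_mul]

lemma red1' (hc : ∀ p, ¬ P1 m t p.1 p.2 → c p = 0) (h1m : 1 < m) :
    ∑ μ : Fin m, c (μ, FF m 1) * monomial (a μ ⊔ a (FF m 1) - a (FF m 1)) (1:K)
      = c (0, FF m 1) * monomial (a 0 ⊔ a (FF m 1) - a (FF m 1)) (1:K) := by
  refine Finset.sum_eq_single 0 (fun μ _ hμ => ?_) (fun h => absurd (Finset.mem_univ _) h)
  have hcz : c (μ, FF m 1) = 0 := by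
    refine hc _ fun hP => hμ ?_
    dsimp only at hP
    rcases hP with h1 | h1 | h1
    · rw [FF_val h1m] at h1
      exact Fin.ext (by rw [Fin.val_zero m]; omega)
    · exact Fin.ext (by rw [h1.1, Fin.val_zero m])
    · exact Fin.ext (by rw [h1.1, Fin.val_zero m])
  rw [hcz, zero_mul]

lemma red2 (hc : ∀ p, ¬ P1 m t p.1 p.2 → c p = 0) {i : ℕ} (h1 : 1 ≤ i) (him : i + 1 < m) :
    ∑ ν : Fin m, c (FF m i, ν) * monomial (a (FF m i) ⊔ a ν - a (FF m i)) (1:K)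
      = c (FF m i, FF m (i+1)) * monomial (a (FF m i) ⊔ a (FF m (i+1)) - a (FF m i)) (1:K) := by
  refine Finset.sum_eq_single (FF m (i+1)) (fun ν _ hν => ?_) (fun h => absurd (Finset.mem_univ _) h)
  have hcz : c (FF m i, ν) = 0 := by
    refine hc _ fun hP => ?_
    dsimp only at hP
    rcases hP with h' | h' | h'
    · rw [FF_val (by omega : i < m)] at h'
      exact hν (Fin.ext (by rw [FF_val him]; omega))
    · rw [FF_val (by omega)] at h'
      omega
    · rw [FF_val (by omega)] at h'
      omega
  rw [hcz, zero_mul]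

lemma red2' (hc : ∀ p, ¬ P1 m t p.1 p.2 → c p = 0) (hm2 : 2 ≤ m) :
    ∑ ν : Fin m, c (FF m (m-1), ν) * monomial (a (FF m (m-1)) ⊔ a ν - a (FF m (m-1))) (1:K)
      = 0 := by
  refine Finset.sum_eq_zero fun ν _ => ?_
  have hcz : c (FF m (m-1), ν) = 0 := by
    refine hc _ fun hP => ?_
    dsimp only at hP
    rcases hP with h' | h' | h' <;> rw [FF_val (by omega)] at h' <;>
      [skip; omega; omega]
    have := ν.isLt
    omega
  rw [hcz, zero_mul]


end Red

lemma hard (a : Fin m → (Fin d →₀ ℕ)) (t : Fin m) (hm : 4 ≤ m) (ht2 : 2 ≤ (t:ℕ))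
    (htm : (t:ℕ) ≤ m - 2) (g : MvPolynomial (Fin d) K)
    (hg : g • bb a 0 t ∈ (F1 a t : Submodule (MvPolynomial (Fin d) K) _)) :
    g ∈ Ideal.span {monomial (NN a (t:ℕ) - (a 0 ⊔ a t)) (1:K),
      monomial ((a 0 ⊔ a (tm1 t) ⊔ a t) - (a 0 ⊔ a t)) (1:K)} := by
  obtain ⟨c, hc, hsum⟩ := (mem_F1 a t _).1 hg
  have hFt : FF m (t:ℕ) = t := Fin.ext (FF_val t.isLt)
  have hval0 : ((0 : Fin m) : ℕ) = 0 := Fin.val_zero m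
  have hx : ∀ j : ℕ, 1 ≤ j → j < m →
      (g • bb a 0 t) (FF m j)
        = if FF m j = t then g * monomial (a 0 ⊔ a t - a t) (1:K) else 0 := by
    intro j h1 hj
    have hne0 : FF m j ≠ 0 := fun h => by
      have := congrArg Fin.val h
      rw [FF_val hj, hval0] at this
      omega
    have ht0 : t ≠ 0 := by
      intro h
      rw [h, hval0] at ht2
      omega
    by_cases hj' : FF m j = t
    · rw [if_pos hj']
      simp [bb, Pi.single_apply, hj', hne0, smul_eq_mul, ht0]
    · rw [if_neg hj']
      simp [bb, Pi.single_apply, hj', hne0, smul_eq_mul]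
  have mulXX : ∀ (q : MvPolynomial (Fin d) K) (u : Fin d →₀ ℕ) (i : Fin m), a i ≤ u →
      q * monomial (u - a i) (1:K) * monomial (a i) (1:K) = q * monomial u (1:K) := by
    intro q u i h
    rw [mul_assoc, monomial_mul, one_mul, tsub_add_cancel_of_le h]
  have dvd_mono : ∀ (q : MvPolynomial (Fin d) K) (u v : Fin d →₀ ℕ), u ≤ v →
      monomial u (1:K) ∣ q * monomial v (1:K) := by
    intro q u v h
    exact dvd_mul_of_dvd_right (monomial_dvd_monomial.2 ⟨Or.inr h, dvd_refl _⟩) q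
  have dvd_self' : ∀ (q : MvPolynomial (Fin d) K) (u : Fin d →₀ ℕ),
      monomial u (1:K) ∣ q * monomial u (1:K) := fun q u => dvd_mul_left _ _
  -- coordinate equation at m-1
  have Elast : c (FF m (m-2), FF m (m-1)) * monomial (a (FF m (m-2)) ⊔ a (FF m (m-1))) (1:K)
      + c (0, FF m (m-1)) * monomial (a 0 ⊔ a (FF m (m-1))) (1:K) = 0 := by
    have h := coordEq a c _ hsum (FF m (m-1))
    rw [red1 a t c hc (by omega : 2 ≤ m-1) (by omega)] at h
    rw [red2' a t c hc (by omega)] at h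
    rw [hx (m-1) (by omega) (by omega)] at h
    rw [if_neg (fun hEq => by
          have := congrArg Fin.val hEq
          rw [FF_val (by omega)] at this
          omega)] at h
    rw [sub_zero] at h
    have h2 := congrArg (· * monomial (a (FF m (m-1))) (1:K)) h
    simp only [add_mul, zero_mul] at h2
    rw [mulXX _ _ _ le_sup_right, mulXX _ _ _ le_sup_right] at h2
    have hmm : m - 1 - 1 = m - 2 := by omega
    rw [hmm] at h2
    exact h2
  have Emid : ∀ j, (t:ℕ) ≤ j → j + 1 ≤ m - 2 →
      c (FF m j, FF m (j+1)) * monomial (a (FF m j) ⊔ a (FF m (j+1))) (1:K)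
        = c (FF m (j+1), FF m (j+2)) * monomial (a (FF m (j+1)) ⊔ a (FF m (j+2))) (1:K) := by
    intro j hj hj2
    have h := coordEq a c _ hsum (FF m (j+1))
    rw [red1 a t c hc (by omega : 2 ≤ j+1) (by omega), red2 a t c hc (by omega) (by omega),
        hx (j+1) (by omega) (by omega), if_neg (fun hEq => by
          have := congrArg Fin.val hEq
          rw [FF_val (by omega)] at this
          omega)] at h
    have hc0 : c (0, FF m (j+1)) = 0 := by
      refine hc _ fun hP => ?_
      dsimp only at hP
      rcases hP with h' | h' | h' <;> rw [FF_val (by omega)] at h' <;>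
        simp only [hval0] at h' <;> omega
    rw [hc0, zero_mul, add_zero, Nat.add_sub_cancel] at h
    have h2 := congrArg (· * monomial (a (FF m (j+1))) (1:K)) h
    simp only [sub_mul, zero_mul] at h2
    rw [mulXX _ _ _ le_sup_right, mulXX _ _ _ le_sup_left] at h2
    have hnorm : j + 1 + 1 = j + 2 := by omega
    rw [hnorm] at h2
    exact sub_eq_zero.mp h2
  have UP : ∀ n j, (t:ℕ) ≤ j → j + n = m - 2 →
      monomial (NN a j) (1:K) ∣
        c (FF m j, FF m (j+1)) * monomial (a (FF m j) ⊔ a (FF m (j+1))) (1:K) := by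
    intro n
    induction n with
    | zero =>
      intro j hj hjn
      have hj2 : j = m - 2 := by omega
      subst hj2
      have heq : c (FF m (m-2), FF m (m-2+1)) * monomial (a (FF m (m-2)) ⊔ a (FF m (m-2+1))) (1:K)
          = -(c (0, FF m (m-1)) * monomial (a 0 ⊔ a (FF m (m-1))) (1:K)) := by
        have hmm : m - 2 + 1 = m - 1 := by omega
        rw [hmm]
        exact eq_neg_of_add_eq_zero_left Elast
      have d1 : monomial (a 0 ⊔ a (FF m (m-1))) (1:K) ∣
          c (FF m (m-2), FF m (m-2+1)) * monomial (a (FF m (m-2)) ⊔ a (FF m (m-2+1))) (1:K) := by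
        rw [heq]
        exact (dvd_neg).2 (dvd_mono _ _ _ le_rfl)
      have d2 := dvd_self' (c (FF m (m-2), FF m (m-2+1))) (a (FF m (m-2)) ⊔ a (FF m (m-2+1)))
      have d3 := sup_dvd d1 d2
      refine dvd_trans (monomial_dvd_monomial.2 ⟨Or.inr ?_, dvd_refl _⟩) d3
      refine NN_le a (le_sup_of_le_left le_sup_left) ?_
      intro i hi
      have hiv : (i:ℕ) = m - 2 ∨ (i:ℕ) = m - 1 := by
        have := i.isLt
        omega
      rcases hiv with hiv | hiv
      · have : i = FF m (m-2) := Fin.ext (by rw [FF_val (by omega)]; omega)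
        rw [this]
        exact le_sup_of_le_right le_sup_left
      · have hmm : m - 2 + 1 = m - 1 := by omega
        have : i = FF m (m-2+1) := Fin.ext (by rw [FF_val (by omega)]; omega)
        rw [this]
        exact le_sup_of_le_right le_sup_right
    | succ n ih =>
      intro j hj hjn
      have heq := Emid j hj (by omega)
      have d1 : monomial (NN a (j+1)) (1:K) ∣
          c (FF m j, FF m (j+1)) * monomial (a (FF m j) ⊔ a (FF m (j+1))) (1:K) := by
        rw [heq]
        exact ih (j+1) (by omega) (by omega)
      have d2 := dvd_self' (c (FF m j, FF m (j+1))) (a (FF m j) ⊔ a (FF m (j+1)))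
      have d3 := sup_dvd d1 d2
      refine dvd_trans (monomial_dvd_monomial.2 ⟨Or.inr ?_, dvd_refl _⟩) d3
      refine NN_le a (le_sup_of_le_left (a0_le_NN a _)) ?_
      intro i hi
      rcases Nat.eq_or_lt_of_le hi with hiv | hiv
      · have : i = FF m j := Fin.ext (by rw [FF_val (by omega)]; omega)
        rw [this]
        exact le_sup_of_le_right le_sup_left
      · exact le_sup_of_le_left (a_le_NN a (by omega))
  have Eone : c (FF m 1, FF m 2) * monomial (a (FF m 1) ⊔ a (FF m 2)) (1:K)
      = c (0, FF m 1) * monomial (a 0 ⊔ a (FF m 1)) (1:K) := by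
    have h := coordEq a c _ hsum (FF m 1)
    rw [red1' a t c hc (by omega), red2 a t c hc le_rfl (by omega),
        hx 1 le_rfl (by omega), if_neg (fun hEq => by
          have := congrArg Fin.val hEq
          rw [FF_val (by omega)] at this
          omega)] at h
    have h2 := congrArg (· * monomial (a (FF m 1)) (1:K)) h
    simp only [sub_mul, zero_mul] at h2
    rw [mulXX _ _ _ le_sup_right, mulXX _ _ _ le_sup_left] at h2
    exact (sub_eq_zero.mp h2).symm
  have Elow : ∀ j, 2 ≤ j → j < (t:ℕ) →
      c (FF m j, FF m (j+1)) * monomial (a (FF m j) ⊔ a (FF m (j+1))) (1:K)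
        = c (FF m (j-1), FF m j) * monomial (a (FF m (j-1)) ⊔ a (FF m j)) (1:K)
          + c (0, FF m j) * monomial (a 0 ⊔ a (FF m j)) (1:K) := by
    intro j hj hjt
    have h := coordEq a c _ hsum (FF m j)
    rw [red1 a t c hc (by omega : 2 ≤ j) (by omega), red2 a t c hc (by omega) (by omega),
        hx j (by omega) (by omega), if_neg (fun hEq => by
          have := congrArg Fin.val hEq
          rw [FF_val (by omega)] at this
          omega)] at h
    have h2 := congrArg (· * monomial (a (FF m j)) (1:K)) h
    simp only [sub_mul, add_mul, zero_mul] at h2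
    rw [mulXX _ _ _ le_sup_right, mulXX _ _ _ le_sup_right, mulXX _ _ _ le_sup_left] at h2
    exact (sub_eq_zero.mp h2).symm
  have DOWN : ∀ j, 1 ≤ j → j < (t:ℕ) →
      monomial (a 0) (1:K) ∣
        c (FF m j, FF m (j+1)) * monomial (a (FF m j) ⊔ a (FF m (j+1))) (1:K) := by
    intro j hj1
    induction j, hj1 using Nat.le_induction with
    | base =>
      intro h1t
      rw [Eone]
      exact dvd_mono _ _ _ le_sup_left
    | succ j hj ih =>
      intro hjt
      rw [Elow (j+1) (by omega) hjt]
      refine dvd_add ?_ (dvd_mono _ _ _ le_sup_left)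
      rw [Nat.add_sub_cancel]
      exact ih (by omega)
  -- main equation at t
  have Et : c (FF m ((t:ℕ)-1), t) * monomial (a (FF m ((t:ℕ)-1)) ⊔ a t) (1:K)
      - c (t, FF m ((t:ℕ)+1)) * monomial (a t ⊔ a (FF m ((t:ℕ)+1))) (1:K)
      = g * monomial (a 0 ⊔ a t) (1:K) := by
    have h := coordEq a c _ hsum (FF m (t:ℕ))
    rw [red1 a t c hc (by omega : 2 ≤ (t:ℕ)) (by omega), red2 a t c hc (by omega) (by omega),
        hx (t:ℕ) (by omega) (by omega), if_pos hFt] at h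
    have hc0 : c (0, FF m (t:ℕ)) = 0 := by
      refine hc _ fun hP => ?_
      dsimp only at hP
      rcases hP with h' | h' | h' <;> rw [FF_val (by omega)] at h' <;>
        simp only [hval0] at h' <;> omega
    rw [hc0, zero_mul, add_zero, hFt] at h
    have h2 := congrArg (· * monomial (a t) (1:K)) h
    simp only [sub_mul] at h2
    rw [mulXX _ _ _ le_sup_right, mulXX _ _ _ le_sup_left, mulXX _ _ _ le_sup_right] at h2
    exact h2
  -- divisibility of the two terms
  have hq : monomial (a 0 ⊔ a (FF m ((t:ℕ)-1)) ⊔ a t) (1:K) ∣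
      c (FF m ((t:ℕ)-1), t) * monomial (a (FF m ((t:ℕ)-1)) ⊔ a t) (1:K) := by
    have hdown := DOWN ((t:ℕ)-1) (by omega) (by omega)
    have hsub : (t:ℕ) - 1 + 1 = (t:ℕ) := by omega
    rw [hsub, hFt] at hdown
    have d2 := dvd_self' (c (FF m ((t:ℕ)-1), t)) (a (FF m ((t:ℕ)-1)) ⊔ a t)
    have d3 := sup_dvd hdown d2
    refine dvd_trans (monomial_dvd_monomial.2 ⟨Or.inr ?_, dvd_refl _⟩) d3
    rw [sup_assoc]
  have hp : monomial (NN a (t:ℕ)) (1:K) ∣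
      c (t, FF m ((t:ℕ)+1)) * monomial (a t ⊔ a (FF m ((t:ℕ)+1))) (1:K) := by
    have hup := UP (m - 2 - (t:ℕ)) (t:ℕ) le_rfl (by omega)
    rwa [hFt] at hup
  obtain ⟨q', hq'⟩ := hq
  obtain ⟨p', hp'⟩ := hp
  rw [hq', hp'] at Et
  have hG2 : monomial (a 0 ⊔ a (FF m ((t:ℕ)-1)) ⊔ a t) (1:K)
      = monomial ((a 0 ⊔ a (FF m ((t:ℕ)-1)) ⊔ a t) - (a 0 ⊔ a t)) (1:K)
        * monomial (a 0 ⊔ a t) (1:K) := by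
    rw [monomial_mul, one_mul, tsub_add_cancel_of_le
      (sup_le (le_sup_of_le_left le_sup_left) le_sup_right)]
  have hG1 : monomial (NN a (t:ℕ)) (1:K)
      = monomial (NN a (t:ℕ) - (a 0 ⊔ a t)) (1:K) * monomial (a 0 ⊔ a t) (1:K) := by
    rw [monomial_mul, one_mul, tsub_add_cancel_of_le
      (sup_le (a0_le_NN a _) (a_le_NN a le_rfl))]
  rw [hG2, hG1] at Et
  have hcancel : (monomial ((a 0 ⊔ a (FF m ((t:ℕ)-1)) ⊔ a t) - (a 0 ⊔ a t)) (1:K) * q'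
      - monomial (NN a (t:ℕ) - (a 0 ⊔ a t)) (1:K) * p') * monomial (a 0 ⊔ a t) (1:K)
      = g * monomial (a 0 ⊔ a t) (1:K) := by
    rw [← Et]
    ring
  have hXne : (monomial (a 0 ⊔ a t) (1:K) : MvPolynomial (Fin d) K) ≠ 0 := by
    simp [monomial_eq_zero]
  have hfin := mul_right_cancel₀ hXne hcancel
  have htm1F : tm1 t = FF m ((t:ℕ)-1) := Fin.ext (by rw [FF_val (by omega)]; rfl)
  rw [htm1F, ← hfin]
  refine sub_mem ?_ ?_
  · exact Ideal.mul_mem_right _ _ (Ideal.subset_span (Set.mem_insert_of_mem _ rfl))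
  · exact Ideal.mul_mem_right _ _ (Ideal.subset_span (Set.mem_insert _ _))


def Pk (m : ℕ) (t : Fin m) (μ ν : Fin m) : Prop :=
  (ν : ℕ) = (μ : ℕ) + 1 ∨ ((μ : ℕ) = 0 ∧ (ν : ℕ) = m - 1)
    ∨ ((μ : ℕ) = 0 ∧ 2 ≤ (ν : ℕ) ∧ (ν : ℕ) ≤ (t : ℕ))

noncomputable def Fk0 (a : Fin m → (Fin d →₀ ℕ)) (t : Fin m) :
    Submodule (MvPolynomial (Fin d) K) (Fin m → MvPolynomial (Fin d) K) :=
  Submodule.span _ { b | ∃ μ ν : Fin m, Pk m t μ ν ∧ b = bb a μ ν }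

lemma tsub_one_eq (t : Fin m) (hm : 4 ≤ m) (ht2 : 2 ≤ (t:ℕ)) : t - 1 = tm1 t := by
  apply Fin.ext
  have h1 : ((1 : Fin m) : ℕ) = 1 := by
    rw [Fin.val_one']
    exact Nat.mod_eq_of_lt (by omega)
  rw [Fin.sub_def]
  show ((m - ((1:Fin m):ℕ)) + (t:ℕ)) % m = (t:ℕ) - 1
  rw [h1]
  have h2 : m - 1 + (t:ℕ) = ((t:ℕ) - 1) + m := by omega
  rw [h2, Nat.add_mod_right,
    Nat.mod_eq_of_lt (lt_of_le_of_lt (Nat.sub_le _ _) t.isLt)]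

lemma final (a : Fin m → (Fin d →₀ ℕ)) (t : Fin m) (hm : 4 ≤ m) (ht2 : 2 ≤ (t:ℕ))
    (htm : (t:ℕ) ≤ m - 2) :
    Nonempty (((Fk0 a t : Submodule (MvPolynomial (Fin d) K) _)
        ⧸ Submodule.comap (Fk0 a t).subtype
            (F1 a t : Submodule (MvPolynomial (Fin d) K) (Fin m → MvPolynomial (Fin d) K)))
        ≃ₗ[MvPolynomial (Fin d) K]
      (MvPolynomial (Fin d) K ⧸ (Ideal.span
        {monomial ((a 0 ⊔ (Finset.univ.filter fun i : Fin m => (t : ℕ) ≤ (i : ℕ)).sup a)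
            - (a 0 ⊔ a t)) (1 : K),
         monomial ((a 0 ⊔ a (t - 1) ⊔ a t) - (a 0 ⊔ a t)) (1 : K)}
        : Ideal (MvPolynomial (Fin d) K)))) := by
  have hval0 : ((0 : Fin m) : ℕ) = 0 := Fin.val_zero m
  rw [tsub_one_eq t hm ht2]
  have hg1NN : (a 0 ⊔ (Finset.univ.filter fun i : Fin m => (t : ℕ) ≤ (i : ℕ)).sup a)
      = NN a (t:ℕ) := rfl
  rw [hg1NN]
  set S' := MvPolynomial (Fin d) K
  set G1 : S' := monomial (NN a (t:ℕ) - (a 0 ⊔ a t)) (1:K) with hG1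
  set G2 : S' := monomial ((a 0 ⊔ a (tm1 t) ⊔ a t) - (a 0 ⊔ a t)) (1:K) with hG2
  have hbb : bb a 0 t ∈ (Fk0 a t : Submodule S' _) := by
    refine subset_span ⟨0, t, ?_, rfl⟩
    exact Or.inr (Or.inr ⟨hval0, ht2, le_rfl⟩)
  set F1' := Submodule.comap (Fk0 a t).subtype (F1 a t : Submodule S' _) with hF1'
  set φ : S' →ₗ[S'] ((Fk0 a t : Submodule S' _) ⧸ F1') :=
    F1'.mkQ.comp (LinearMap.toSpanSingleton S' _ ⟨bb a 0 t, hbb⟩) with hφ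
  have hφr : ∀ r : S', φ r = F1'.mkQ ⟨r • bb a 0 t, Submodule.smul_mem _ r hbb⟩ := by
    intro r
    rfl
  have hsurj : Function.Surjective φ := by
    have hsub : (Fk0 a t : Submodule S' _)
        ≤ (F1 a t : Submodule S' _) ⊔ Submodule.span S' {bb a 0 t} := by
      rw [Fk0, span_le]
      rintro b ⟨μ, ν, hP, rfl⟩
      rcases hP with h' | h' | h'
      · exact Submodule.mem_sup_left (gen_mem a (Or.inl h'))
      · exact Submodule.mem_sup_left (gen_mem a (Or.inr (Or.inl h')))
      · rcases Nat.lt_or_ge (ν : ℕ) (t : ℕ) with hlt | hge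
        · exact Submodule.mem_sup_left (gen_mem a (Or.inr (Or.inr ⟨h'.1, h'.2.1, hlt⟩)))
        · have hν : ν = t := Fin.ext (le_antisymm h'.2.2 hge)
          have hμ : μ = 0 := Fin.ext (by rw [h'.1, hval0])
          rw [hν, hμ]
          exact Submodule.mem_sup_right (subset_span rfl)
    intro x
    obtain ⟨⟨y, hy⟩, rfl⟩ := F1'.mkQ_surjective x
    obtain ⟨u, hu, v, hv, huv⟩ := Submodule.mem_sup.1 (hsub hy)
    obtain ⟨r, rfl⟩ := Submodule.mem_span_singleton.1 hv
    refine ⟨r, ?_⟩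
    rw [hφr r, Submodule.mkQ_apply, Submodule.mkQ_apply, Submodule.Quotient.eq]
    show (r • bb a 0 t - y : Fin m → S') ∈ (F1 a t : Submodule S' _)
    have : r • bb a 0 t - y = -u := by
      rw [← huv]
      abel
    rw [this]
    exact neg_mem hu
  have hker : LinearMap.ker φ = Ideal.span {G1, G2} := by
    ext r
    have : r ∈ LinearMap.ker φ ↔ r • bb a 0 t ∈ (F1 a t : Submodule S' _) := by
      rw [LinearMap.mem_ker, hφr r, Submodule.mkQ_apply, Submodule.Quotient.mk_eq_zero]
      rfl
    rw [this]
    constructor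
    · intro h
      exact hard a t hm ht2 htm r h
    · intro h
      refine Submodule.span_induction ?_ ?_ ?_ ?_ h
      · rintro x (rfl | rfl)
        · exact g1_mem a t hm ht2 htm
        · exact g2_mem a t ht2 htm
      · rw [zero_smul]
        exact zero_mem _
      · intro x y _ _ hx hy
        rw [add_smul]
        exact add_mem hx hy
      · intro s x _ hx
        rw [smul_eq_mul, mul_smul]
        exact Submodule.smul_mem _ s hx
  exact ⟨((Submodule.quotEquivOfEq _ _ hker).symm.trans
    (φ.quotKerEquivOfSurjective hsurj)).symm⟩

end S19

open S19 in
theorem stmt19 {K : Type*} [Field K] (d m : ℕ) (hm : 4 ≤ m) [NeZero m]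
    (a : Fin m → (Fin d →₀ ℕ)) (t : Fin m)
    (ht2 : 2 ≤ (t : ℕ)) (htm : (t : ℕ) ≤ m - 2) :
    (letI S := MvPolynomial (Fin d) K
     letI β : Fin m → Fin m → (Fin m → S) := fun μ ν =>
       Pi.single ν (monomial (a μ ⊔ a ν - a ν) (1 : K))
         - Pi.single μ (monomial (a μ ⊔ a ν - a μ) (1 : K))
     letI Fk : Submodule S (Fin m → S) := Submodule.span S
       { b | ∃ μ ν : Fin m,
           ((ν : ℕ) = (μ : ℕ) + 1 ∨ ((μ : ℕ) = 0 ∧ (ν : ℕ) = m - 1)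
             ∨ ((μ : ℕ) = 0 ∧ 2 ≤ (ν : ℕ) ∧ (ν : ℕ) ≤ (t : ℕ)))
           ∧ b = β μ ν }
     letI Fk1 : Submodule S (Fin m → S) := Submodule.span S
       { b | ∃ μ ν : Fin m,
           ((ν : ℕ) = (μ : ℕ) + 1 ∨ ((μ : ℕ) = 0 ∧ (ν : ℕ) = m - 1)
             ∨ ((μ : ℕ) = 0 ∧ 2 ≤ (ν : ℕ) ∧ (ν : ℕ) < (t : ℕ)))
           ∧ b = β μ ν }
     letI g1 : S := monomial
       ((a 0 ⊔ (Finset.univ.filter fun i : Fin m => (t : ℕ) ≤ (i : ℕ)).sup a)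
         - (a 0 ⊔ a t)) (1 : K)
     letI g2 : S := monomial ((a 0 ⊔ a (t - 1) ⊔ a t) - (a 0 ⊔ a t)) (1 : K)
     Nonempty ((Fk ⧸ Submodule.comap Fk.subtype Fk1) ≃ₗ[S]
       (S ⧸ (Ideal.span {g1, g2} : Ideal S)))) := by
  exact final a t hm ht2 htm
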